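/- For every set partition π of [n] and every permutation w in S_n, the set-partition fermions satisfy w · F_π = sign(w) · F_{w(π)}, where w(π) is the set partition whose blocks are the images of the blocks of π under w. -/

import Mathlib

open Finset

/-- The index set for the `2n` fermionic generators `θ₁,…,θₙ,ξ₁,…,ξₙ`:
`Sum.inl i` is `θ_i`, `Sum.inr i` is `ξ_i`. -/
abbrev Gen (n : ℕ) := Fin n ⊕ Fin n

/-- The position of a generator in the fixed order `θ₁ < ⋯ < θₙ < ξ₁ < ⋯ < ξₙ`. -/
def gidx {n : ℕ} : Gen n → ℕ
  | .inl i => (i : ℕ)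
  | .inr i => n + (i : ℕ)

/-- The exterior algebra `∧{Θ_n, Ξ_n}` over `ℂ`, modeled by coefficient functions
on the basis of monomials `θ_S · ξ_T`, a monomial being indexed by a subset of the
`2n` generators. -/
abbrev ExtA (n : ℕ) := Finset (Gen n) → ℂ

/-- The basis monomial indexed by a set of generators (product taken in the fixed order). -/
noncomputable def emon {n : ℕ} (S : Finset (Gen n)) : ExtA n := fun T => if T = S then 1 else 0

/-- The generator `θ_i`. -/
noncomputable def theta {n : ℕ} (i : Fin n) : ExtA n := emon {Sum.inl i}

/-- The generator `ξ_i`. -/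
noncomputable def xi {n : ℕ} (i : Fin n) : ExtA n := emon {Sum.inr i}

/-- The sign `(-1)^{#inversions}` obtained when concatenating the sorted monomial on `S`
with the sorted monomial on `T` and re-sorting. -/
noncomputable def msign {n : ℕ} (S T : Finset (Gen n)) : ℂ :=
  (-1 : ℂ) ^ (((S ×ˢ T).filter (fun p => gidx p.2 < gidx p.1)).card)

/-- Multiplication in the exterior algebra `∧{Θ_n, Ξ_n}`. -/
noncomputable def emul {n : ℕ} (f g : ExtA n) : ExtA n :=
  fun U => ∑ S ∈ U.powerset, msign S (U \ S) * f S * g (U \ S)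

/-- The inner product on `∧{Θ_n, Ξ_n}` making the monomials `θ_S · ξ_T` orthonormal. -/
noncomputable def einner {n : ℕ} (f g : ExtA n) : ℂ :=
  ∑ S : Finset (Gen n), f S * g S

/-- The contraction (exterior differentiation) action `f ⊙ h`: on generators,
`ω_i ⊙ (ω_{j_1} ⋯ ω_{j_r})` removes `ω_i` with the sign `(-1)^{s-1}` if `j_s = i`
and gives `0` otherwise, extended bilinearly (on a monomial `ω_S`, it is the
composite of the single contractions). -/
noncomputable def odot {n : ℕ} (f h : ExtA n) : ExtA n :=
  fun T => ∑ S : Finset (Gen n), if Disjoint S T then msign S T * f S * h (S ∪ T) else 0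

/-- The sign produced when the permutation `w` reorders the (sorted) monomial on `S`. -/
noncomputable def actsign {n : ℕ} (w : Equiv.Perm (Fin n)) (S : Finset (Gen n)) : ℂ :=
  (-1 : ℂ) ^ (((S ×ˢ S).filter (fun p =>
      gidx p.1 < gidx p.2 ∧
        gidx (Equiv.sumCongr w w p.2) < gidx (Equiv.sumCongr w w p.1))).card)

/-- The diagonal action of a permutation `w ∈ S_n` on `∧{Θ_n, Ξ_n}`:
`w · θ_i = θ_{w(i)}`, `w · ξ_i = ξ_{w(i)}`, extended as an algebra automorphism. -/
noncomputable def pact {n : ℕ} (w : Equiv.Perm (Fin n)) (f : ExtA n) : ExtA n :=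
  fun T =>
    actsign w (T.map (Equiv.sumCongr w w).symm.toEmbedding) *
      f (T.map (Equiv.sumCongr w w).symm.toEmbedding)

/-- The block operator `ρ_B`: for `|B| > 1`, `ρ_B(f) = ∑_{i ≠ j ∈ B} ξ_i · (θ_j ⊙ f)`;
for `B = {i}`, `ρ_B(f) = ξ_i · (θ_i ⊙ f)`. -/
noncomputable def rho {n : ℕ} (B : Finset (Fin n)) (f : ExtA n) : ExtA n :=
  if 1 < B.card then
    ∑ i ∈ B, ∑ j ∈ B.erase i, emul (xi i) (odot (theta j) f)
  else
    ∑ i ∈ B, emul (xi i) (odot (theta i) f)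

/-- The operator `ψ_B`, equal to `ρ_B` when `|B| > 1` and `0` when `|B| ≤ 1`. -/
noncomputable def psi {n : ℕ} (B : Finset (Fin n)) (f : ExtA n) : ExtA n :=
  if 1 < B.card then rho B f else 0

/-- The two-set operator `ψ_{A,B}(f) = ∑_{a ∈ A, b ∈ B} [ξ_a·(θ_b ⊙ f) + ξ_b·(θ_a ⊙ f)]`. -/
noncomputable def psiPair {n : ℕ} (A B : Finset (Fin n)) (f : ExtA n) : ExtA n :=
  ∑ a ∈ A, ∑ b ∈ B, (emul (xi a) (odot (theta b) f) + emul (xi b) (odot (theta a) f))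

/-- A set partition of `[n]` is noncrossing if whenever `a < b < c < d` with `a,c` in a
block `B` and `b,d` in a block `C`, then `B = C`. -/
def Noncrossing {n : ℕ} (π : Finpartition (Finset.univ : Finset (Fin n))) : Prop :=
  ∀ B ∈ π.parts, ∀ C ∈ π.parts, ∀ a b c d : Fin n,
    a < b → b < c → c < d → a ∈ B → c ∈ B → b ∈ C → d ∈ C → B = C

/-- The composite operator `ρ_π = ρ_{B_1} ∘ ⋯ ∘ ρ_{B_k}` over the blocks of `π`
(the order of composition is immaterial since block operators commute). -/
noncomputable def rhoPartition {n : ℕ} (π : Finpartition (Finset.univ : Finset (Fin n))) :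
    ExtA n → ExtA n :=
  π.parts.toList.foldr (fun B g => rho B ∘ g) id

/-- The top monomial `θ_1 θ_2 ⋯ θ_n`. -/
noncomputable def topTheta (n : ℕ) : ExtA n :=
  emon ((Finset.univ : Finset (Fin n)).image Sum.inl)

/-- The fermion `F_π := ρ_π(θ_1 θ_2 ⋯ θ_n)` attached to a set partition `π` of `[n]`. -/
noncomputable def Fperm {n : ℕ} (π : Finpartition (Finset.univ : Finset (Fin n))) : ExtA n :=
  rhoPartition π (topTheta n)

/-- The fermion `f_π := (ξ_1 + ⋯ + ξ_n) ⊙ F_π`. -/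
noncomputable def fperm {n : ℕ} (π : Finpartition (Finset.univ : Finset (Fin n))) : ExtA n :=
  odot (∑ i : Fin n, xi i) (Fperm π)
/- ===================== auxiliary development ===================== -/

section Aux

variable {n : ℕ}

lemma gidx_injective : Function.Injective (gidx (n := n)) := by
  rintro (a | a) (b | b) h <;> simp only [gidx] at h
  · exact congrArg Sum.inl (Fin.ext h)
  · exact absurd h (by have := a.isLt; omega)
  · exact absurd h (by have := b.isLt; omega)
  · exact congrArg Sum.inr (Fin.ext (by omega))

/-- single-generator sign -/
noncomputable def ms (a : Gen n) (T : Finset (Gen n)) : ℂ :=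
  (-1 : ℂ) ^ ((T.filter (fun t => gidx t < gidx a)).card)

lemma ms_sq (a : Gen n) (T : Finset (Gen n)) : ms a T * ms a T = 1 := by
  rw [ms, ← pow_add]
  exact Even.neg_one_pow ⟨_, rfl⟩

lemma msign_singleton (a : Gen n) (T : Finset (Gen n)) : msign {a} T = ms a T := by
  unfold msign ms
  congr 1
  rw [Finset.singleton_product, Finset.filter_map, Finset.card_map]
  rfl

lemma ms_insert (a b : Gen n) (T : Finset (Gen n)) (hb : b ∉ T) :
    ms a (insert b T) = (if gidx b < gidx a then -1 else 1) * ms a T := by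
  unfold ms
  rw [Finset.filter_insert]
  split_ifs with h
  · rw [Finset.card_insert_of_notMem (fun hc => hb (Finset.mem_filter.1 hc).1), pow_succ]
    ring
  · ring

lemma ms_erase_self (a : Gen n) (T : Finset (Gen n)) : ms a (T.erase a) = ms a T := by
  unfold ms
  congr 2
  ext t
  simp only [Finset.mem_filter, Finset.mem_erase]
  constructor
  · rintro ⟨⟨_, ht⟩, hp⟩; exact ⟨ht, hp⟩
  · rintro ⟨ht, hp⟩
    refine ⟨⟨fun he => ?_, ht⟩, hp⟩
    subst he; exact absurd hp (lt_irrefl _)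

lemma ms_erase (a c : Gen n) (T : Finset (Gen n)) (hc : c ∈ T) :
    ms a (T.erase c) = (if gidx c < gidx a then -1 else 1) * ms a T := by
  have h := ms_insert a c (T.erase c) (Finset.notMem_erase c T)
  rw [Finset.insert_erase hc] at h
  rw [h]
  split_ifs <;> ring

lemma sgn_neg (x y : ℕ) (hxy : x ≠ y) :
    (if x < y then (-1 : ℂ) else 1) = -(if y < x then -1 else 1) := by
  rcases hxy.lt_or_gt with h | h
  · simp [h, not_lt_of_gt h]
  · simp [h, not_lt_of_gt h]

/-- multiplication by a generator, abstract form -/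
noncomputable def opX (a : Gen n) (g : ExtA n) : ExtA n :=
  fun U => if a ∈ U then ms a (U.erase a) * g (U.erase a) else 0

/-- contraction by a generator, abstract form -/
noncomputable def opD (a : Gen n) (f : ExtA n) : ExtA n :=
  fun T => if a ∈ T then 0 else ms a T * f (insert a T)

lemma emul_xi (i : Fin n) (g : ExtA n) : emul (xi i) g = opX (Sum.inr i) g := by
  funext U
  unfold emul opX xi emon
  simp only [mul_ite, mul_one, mul_zero, ite_mul, zero_mul]
  rw [Finset.sum_ite_eq' U.powerset ({Sum.inr i} : Finset (Gen n))
    (fun S => msign S (U \ S) * g (U \ S))]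
  by_cases h : Sum.inr i ∈ U
  · rw [if_pos (by simpa using h), if_pos h]
    simp only [Finset.sdiff_singleton_eq_erase, msign_singleton]
  · rw [if_neg (by simpa using h), if_neg h]

lemma odot_theta (j : Fin n) (f : ExtA n) : odot (theta j) f = opD (Sum.inl j) f := by
  funext T
  unfold odot opD theta emon
  have key : ∀ S : Finset (Gen n),
      (if Disjoint S T then msign S T * (if S = {Sum.inl j} then 1 else 0) * f (S ∪ T) else 0)
      = (if S = {Sum.inl j} then
          (if Disjoint ({Sum.inl j} : Finset (Gen n)) T then
            msign {Sum.inl j} T * f ({Sum.inl j} ∪ T) else 0) else 0) := by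
    intro S
    by_cases hS : S = {Sum.inl j}
    · subst hS; simp
    · simp [hS]
  rw [Finset.sum_congr rfl (fun S _ => key S), Finset.sum_ite_eq' Finset.univ
    ({Sum.inl j} : Finset (Gen n)) _]
  simp only [Finset.mem_univ, if_true]
  by_cases h : Sum.inl j ∈ T
  · rw [if_neg (by simpa [Finset.disjoint_singleton_left] using h), if_pos h]
  · rw [if_pos (by simpa [Finset.disjoint_singleton_left] using h), if_neg h,
      msign_singleton, ← Finset.insert_eq]

lemma opX_sum {ι : Type*} (a : Gen n) (s : Finset ι) (F : ι → ExtA n) :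
    opX a (∑ x ∈ s, F x) = ∑ x ∈ s, opX a (F x) := by
  funext U
  simp only [opX, Finset.sum_apply]
  split_ifs with h
  · rw [Finset.mul_sum]
  · simp

lemma opD_sum {ι : Type*} (a : Gen n) (s : Finset ι) (F : ι → ExtA n) :
    opD a (∑ x ∈ s, F x) = ∑ x ∈ s, opD a (F x) := by
  funext T
  simp only [opD, Finset.sum_apply]
  split_ifs with h
  · simp
  · rw [Finset.mul_sum]

lemma opX_smul (a : Gen n) (c : ℂ) (f : ExtA n) : opX a (c • f) = c • opX a f := by
  funext U
  simp only [opX, Pi.smul_apply, smul_eq_mul]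
  split_ifs <;> ring

lemma opD_smul (a : Gen n) (c : ℂ) (f : ExtA n) : opD a (c • f) = c • opD a f := by
  funext T
  simp only [opD, Pi.smul_apply, smul_eq_mul]
  split_ifs <;> ring

lemma opX_neg (a : Gen n) (f : ExtA n) : opX a (-f) = -(opX a f) := by
  funext U
  simp only [opX, Pi.neg_apply]
  split_ifs <;> ring

lemma opD_neg (a : Gen n) (f : ExtA n) : opD a (-f) = -(opD a f) := by
  funext T
  simp only [opD, Pi.neg_apply]
  split_ifs <;> ring

lemma opX_zero (a : Gen n) : opX a (0 : ExtA n) = 0 := by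
  funext U
  simp [opX]

lemma opD_zero (a : Gen n) : opD a (0 : ExtA n) = 0 := by
  funext T
  simp [opD]

lemma opX_opX_self (a : Gen n) (g : ExtA n) : opX a (opX a g) = 0 := by
  funext U
  simp [opX, Finset.notMem_erase]

lemma opD_opD_self (a : Gen n) (f : ExtA n) : opD a (opD a f) = 0 := by
  funext T
  simp [opD, Finset.mem_insert]

lemma opD_opX (a b : Gen n) (hab : b ≠ a) (g : ExtA n) :
    opD b (opX a g) = -(opX a (opD b g)) := by
  funext T
  simp only [opD, opX, Pi.neg_apply]
  by_cases hb : b ∈ T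
  · simp [hb, Finset.mem_erase, hab]
  · by_cases ha : a ∈ T
    · have hbe : b ∉ T.erase a := fun h => hb (Finset.mem_erase.1 h).2
      have haib : a ∈ insert b T := Finset.mem_insert_of_mem ha
      rw [if_neg hb, if_pos ha, if_neg hbe, if_pos haib,
        Finset.erase_insert_of_ne hab, ms_insert _ _ _ hbe, ms_erase b a T ha,
        sgn_neg (gidx b) (gidx a) (fun h => hab (gidx_injective h)),
        sgn_neg (gidx a) (gidx b) (fun h => hab (gidx_injective h.symm))]
      ring
    · have : a ∉ insert b T := by
        simp only [Finset.mem_insert]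
        rintro (rfl | h)
        · exact hab rfl
        · exact ha h
      rw [if_neg hb, if_neg ha, if_neg this]
      ring

lemma opX_opX (a b : Gen n) (hab : a ≠ b) (g : ExtA n) :
    opX a (opX b g) = -(opX b (opX a g)) := by
  funext U
  simp only [opX, Pi.neg_apply]
  by_cases ha : a ∈ U <;> by_cases hb : b ∈ U
  · have hbe : b ∈ U.erase a := Finset.mem_erase.2 ⟨fun h => hab h.symm, hb⟩
    have hae : a ∈ U.erase b := Finset.mem_erase.2 ⟨hab, ha⟩
    have hset : (U.erase a).erase b = (U.erase b).erase a := Finset.erase_right_comm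
    rw [if_pos ha, if_pos hb, if_pos hbe, if_pos hae, hset, ms_erase_self a U,
      ms_erase_self b U]
    have e1 : ms b ((U.erase b).erase a) = (if gidx a < gidx b then (-1:ℂ) else 1) * ms b U := by
      rw [← hset, ms_erase_self, ms_erase b a U ha]
    have e2 : ms a ((U.erase b).erase a) = (if gidx b < gidx a then (-1:ℂ) else 1) * ms a U := by
      rw [ms_erase_self, ms_erase a b U hb]
    rw [e1, e2, sgn_neg (gidx a) (gidx b) (fun h => hab (gidx_injective h))]
    ring
  · have : b ∉ U.erase a := fun h => hb (Finset.mem_erase.1 h).2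
    rw [if_pos ha, if_neg hb, if_neg this]
    ring
  · have : a ∉ U.erase b := fun h => ha (Finset.mem_erase.1 h).2
    rw [if_neg ha, if_pos hb, if_neg this]
    ring
  · rw [if_neg ha, if_neg hb]
    ring

lemma opD_opD (a b : Gen n) (hab : a ≠ b) (f : ExtA n) :
    opD a (opD b f) = -(opD b (opD a f)) := by
  funext T
  simp only [opD, Pi.neg_apply]
  by_cases ha : a ∈ T <;> by_cases hb : b ∈ T
  · rw [if_pos ha, if_pos hb]; ring
  · have : a ∈ insert b T := Finset.mem_insert_of_mem ha
    rw [if_pos ha, if_neg hb, if_pos this]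
    ring
  · have : b ∈ insert a T := Finset.mem_insert_of_mem hb
    rw [if_neg ha, if_pos hb, if_pos this]
    ring
  · have hai : a ∉ insert b T := by
      simp only [Finset.mem_insert]; rintro (rfl | h); exacts [hab rfl, ha h]
    have hbi : b ∉ insert a T := by
      simp only [Finset.mem_insert]; rintro (rfl | h); exacts [hab rfl, hb h]
    rw [if_neg ha, if_neg hb, if_neg hai, if_neg hbi,
      ms_insert b a T ha, ms_insert a b T hb, Finset.insert_comm,
      sgn_neg (gidx a) (gidx b) (fun h => hab (gidx_injective h))]
    ring

end Aux
section Aux2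

variable {n : ℕ}

lemma rho_eq (B : Finset (Fin n)) (f : ExtA n) :
    rho B f = if 1 < B.card then
        ∑ i ∈ B, ∑ j ∈ B.erase i, opX (Sum.inr i) (opD (Sum.inl j) f)
      else ∑ i ∈ B, opX (Sum.inr i) (opD (Sum.inl i) f) := by
  unfold rho
  simp only [emul_xi, odot_theta]

lemma term_comm (i k j l : Fin n) (f : ExtA n) :
    opX (Sum.inr i) (opD (Sum.inl j) (opX (Sum.inr k) (opD (Sum.inl l) f)))
      = opX (Sum.inr k) (opD (Sum.inl l) (opX (Sum.inr i) (opD (Sum.inl j) f))) := by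
  have hDX : ∀ (b c : Fin n) (h : ExtA n),
      opD (Sum.inl b) (opX (Sum.inr c) h) = -(opX (Sum.inr c) (opD (Sum.inl b) h)) :=
    fun b c h => opD_opX _ _ (by simp) h
  rw [hDX, opX_neg, hDX, opX_neg]
  by_cases hik : i = k
  · subst hik
    rw [opX_opX_self, opX_opX_self]
  · rw [opX_opX (Sum.inr i) (Sum.inr k) (by simp [hik]) _, neg_neg]
    by_cases hjl : j = l
    · subst hjl
      simp only [opD_opD_self, opX_zero, neg_zero]
    · rw [opD_opD (Sum.inl j) (Sum.inl l) (by simp [hjl]) f, opX_neg, opX_neg]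

lemma rho_sum (B : Finset (Fin n)) {ι : Type*} (s : Finset ι) (F : ι → ExtA n) :
    rho B (∑ x ∈ s, F x) = ∑ x ∈ s, rho B (F x) := by
  rw [rho_eq]
  by_cases h : 1 < B.card
  · rw [if_pos h]
    rw [Finset.sum_congr rfl (fun x (_ : x ∈ s) => (by rw [rho_eq, if_pos h] :
      rho B (F x) = ∑ i ∈ B, ∑ j ∈ B.erase i, opX (Sum.inr i) (opD (Sum.inl j) (F x))))]
    simp only [opD_sum, opX_sum]
    rw [Finset.sum_congr rfl (fun i (_ : i ∈ B) => (Finset.sum_comm :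
      (∑ j ∈ B.erase i, ∑ x ∈ s, opX (Sum.inr i) (opD (Sum.inl j) (F x)))
        = ∑ x ∈ s, ∑ j ∈ B.erase i, opX (Sum.inr i) (opD (Sum.inl j) (F x))))]
    exact Finset.sum_comm
  · rw [if_neg h]
    rw [Finset.sum_congr rfl (fun x (_ : x ∈ s) => (by rw [rho_eq, if_neg h] :
      rho B (F x) = ∑ i ∈ B, opX (Sum.inr i) (opD (Sum.inl i) (F x))))]
    simp only [opD_sum, opX_sum]
    exact Finset.sum_comm

lemma rho_smul (B : Finset (Fin n)) (c : ℂ) (f : ExtA n) :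
    rho B (c • f) = c • rho B f := by
  rw [rho_eq, rho_eq]
  split_ifs <;> simp only [opD_smul, opX_smul, Finset.smul_sum]

lemma rho_term_comm (B : Finset (Fin n)) (k l : Fin n) (f : ExtA n) :
    rho B (opX (Sum.inr k) (opD (Sum.inl l) f)) = opX (Sum.inr k) (opD (Sum.inl l) (rho B f)) := by
  rw [rho_eq, rho_eq]
  split_ifs with h
  · simp only [opD_sum, opX_sum]
    exact Finset.sum_congr rfl fun i _ => Finset.sum_congr rfl fun j _ => term_comm i k j l f
  · simp only [opD_sum, opX_sum]
    exact Finset.sum_congr rfl fun i _ => term_comm i k i l f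

lemma rho_comm (B C : Finset (Fin n)) (f : ExtA n) :
    rho B (rho C f) = rho C (rho B f) := by
  rw [rho_eq C f]
  by_cases hC : 1 < C.card
  · rw [if_pos hC]
    simp only [rho_sum, rho_term_comm]
    conv_rhs => rw [rho_eq C, if_pos hC]
  · rw [if_neg hC]
    simp only [rho_sum, rho_term_comm]
    conv_rhs => rw [rho_eq C, if_neg hC]

end Aux2
section Aux3

variable {n : ℕ}

lemma neg_one_pow_congr' {m k : ℕ} (h : (m : ZMod 2) = (k : ZMod 2)) :
    (-1 : ℂ) ^ m = (-1 : ℂ) ^ k := by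
  have h2 : m % 2 = k % 2 := (ZMod.natCast_eq_natCast_iff m k 2).1 h
  conv_lhs => rw [← Nat.div_add_mod m 2]
  conv_rhs => rw [← Nat.div_add_mod k 2]
  rw [pow_add, pow_add, pow_mul, pow_mul, h2]
  norm_num

lemma card_pair_filter {α : Type*} (A B : Finset α) (R : α → α → Prop)
    [∀ a b, Decidable (R a b)] :
    ((((A ×ˢ B).filter fun p => R p.1 p.2)).card : ZMod 2)
      = ∑ a ∈ A, ∑ b ∈ B, (if R a b then (1 : ZMod 2) else 0) := by
  rw [Finset.card_filter, Finset.sum_product]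
  push_cast
  rfl

lemma msign_map (w : Equiv.Perm (Fin n)) (S T : Finset (Gen n)) :
    msign (S.map (Equiv.sumCongr w w).toEmbedding) (T.map (Equiv.sumCongr w w).toEmbedding)
      = (-1 : ℂ) ^ (((S ×ˢ T).filter (fun p =>
          gidx (Equiv.sumCongr w w p.2) < gidx (Equiv.sumCongr w w p.1))).card) := by
  unfold msign
  congr 1
  refine Finset.card_bij (fun p _ => ((Equiv.sumCongr w w).symm p.1, (Equiv.sumCongr w w).symm p.2))
    ?_ ?_ ?_
  · intro p hp
    simp only [Finset.mem_filter, Finset.mem_product, Finset.mem_map_equiv] at hp ⊢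
    refine ⟨⟨hp.1.1, hp.1.2⟩, ?_⟩
    simpa using hp.2
  · intro p hp q hq h
    simp only [Prod.mk.injEq] at h
    exact Prod.ext ((Equiv.sumCongr w w).symm.injective h.1)
      ((Equiv.sumCongr w w).symm.injective h.2)
  · intro q hq
    simp only [Finset.mem_filter, Finset.mem_product] at hq
    refine ⟨((Equiv.sumCongr w w) q.1, (Equiv.sumCongr w w) q.2), ?_, by simp⟩
    simp only [Finset.mem_filter, Finset.mem_product, Finset.mem_map_equiv]
    simpa using hq

lemma pair_parity (w : Equiv.Perm (Fin n)) {a b : Gen n} (hab : a ≠ b) :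
    ((if gidx a < gidx b ∧ gidx (Equiv.sumCongr w w b) < gidx (Equiv.sumCongr w w a)
        then (1 : ZMod 2) else 0)
      + (if gidx b < gidx a ∧ gidx (Equiv.sumCongr w w a) < gidx (Equiv.sumCongr w w b)
        then (1 : ZMod 2) else 0))
      = (if gidx b < gidx a then (1 : ZMod 2) else 0)
        + (if gidx (Equiv.sumCongr w w b) < gidx (Equiv.sumCongr w w a)
          then (1 : ZMod 2) else 0) := by
  have h1 : gidx a ≠ gidx b := fun h => hab (gidx_injective h)
  have h2 : gidx (Equiv.sumCongr w w a) ≠ gidx (Equiv.sumCongr w w b) :=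
    fun h => hab ((Equiv.sumCongr w w).injective (gidx_injective h))
  set x := gidx a with hx
  set y := gidx b with hy
  set u := gidx (Equiv.sumCongr w w a) with hu
  set v := gidx (Equiv.sumCongr w w b) with hv
  rcases h1.lt_or_gt with c1 | c1 <;> rcases h2.lt_or_gt with c2 | c2
  · simp [lt_asymm c1, lt_asymm c2]
  · simp [c1, c2, lt_asymm c1, lt_asymm c2]
  · simp [c1, c2, lt_asymm c1, lt_asymm c2]
  · simp only [lt_asymm c1, lt_asymm c2, and_false, false_and, if_false, c1, c2, if_true,
      and_true, true_and, if_pos, add_zero, zero_add]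
    decide

lemma actsign_union (w : Equiv.Perm (Fin n)) (S T : Finset (Gen n)) (hd : Disjoint S T) :
    actsign w (S ∪ T) = actsign w S * actsign w T * msign S T *
      msign (S.map (Equiv.sumCongr w w).toEmbedding) (T.map (Equiv.sumCongr w w).toEmbedding) := by
  classical
  rw [msign_map]
  unfold actsign msign
  rw [← pow_add, ← pow_add, ← pow_add]
  apply neg_one_pow_congr'
  rw [Nat.cast_add, Nat.cast_add, Nat.cast_add]
  rw [card_pair_filter (S ∪ T) (S ∪ T) (fun a b => gidx a < gidx b ∧
      gidx (Equiv.sumCongr w w b) < gidx (Equiv.sumCongr w w a)),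
    card_pair_filter S S (fun a b => gidx a < gidx b ∧
      gidx (Equiv.sumCongr w w b) < gidx (Equiv.sumCongr w w a)),
    card_pair_filter T T (fun a b => gidx a < gidx b ∧
      gidx (Equiv.sumCongr w w b) < gidx (Equiv.sumCongr w w a)),
    card_pair_filter S T (fun a b => gidx b < gidx a),
    card_pair_filter S T (fun a b => gidx (Equiv.sumCongr w w b) < gidx (Equiv.sumCongr w w a))]
  set F : Gen n → Gen n → ZMod 2 := fun a b =>
    if gidx a < gidx b ∧ gidx (Equiv.sumCongr w w b) < gidx (Equiv.sumCongr w w a)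
      then 1 else 0 with hF
  have h1 : ∀ A : Finset (Gen n), (∑ a ∈ A, ∑ b ∈ S ∪ T, F a b)
      = (∑ a ∈ A, ∑ b ∈ S, F a b) + ∑ a ∈ A, ∑ b ∈ T, F a b := by
    intro A
    rw [← Finset.sum_add_distrib]
    exact Finset.sum_congr rfl fun a _ => Finset.sum_union hd
  rw [Finset.sum_union hd, h1 S, h1 T]
  have h2 : (∑ a ∈ T, ∑ b ∈ S, F a b) = ∑ a ∈ S, ∑ b ∈ T, F b a := Finset.sum_comm
  rw [h2]
  have h3 : ((∑ a ∈ S, ∑ b ∈ T, F a b) + ∑ a ∈ S, ∑ b ∈ T, F b a)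
      = (∑ a ∈ S, ∑ b ∈ T, (if gidx b < gidx a then (1 : ZMod 2) else 0))
        + ∑ a ∈ S, ∑ b ∈ T, (if gidx (Equiv.sumCongr w w b) < gidx (Equiv.sumCongr w w a)
            then (1 : ZMod 2) else 0) := by
    rw [← Finset.sum_add_distrib, ← Finset.sum_add_distrib]
    refine Finset.sum_congr rfl fun a ha => ?_
    rw [← Finset.sum_add_distrib, ← Finset.sum_add_distrib]
    refine Finset.sum_congr rfl fun b hb => ?_
    exact pair_parity w (fun h => Finset.disjoint_left.1 hd ha (h ▸ hb))
  linear_combination h3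

end Aux3
section Aux4

variable {n : ℕ}

lemma actsign_singleton (w : Equiv.Perm (Fin n)) (x : Gen n) : actsign w ({x} : Finset (Gen n)) = 1 := by
  unfold actsign
  rw [Finset.singleton_product_singleton, Finset.filter_singleton, if_neg (by simp)]
  simp

lemma map_symm_map (w : Equiv.Perm (Fin n)) (T : Finset (Gen n)) :
    (T.map (Equiv.sumCongr w w).symm.toEmbedding).map (Equiv.sumCongr w w).toEmbedding = T := by
  rw [Finset.map_map]
  have he : ((Equiv.sumCongr w w).symm.toEmbedding.trans (Equiv.sumCongr w w).toEmbedding)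
      = Function.Embedding.refl (Gen n) := by
    ext a
    simp
  rw [he, Finset.map_refl]

lemma map_map_symm (w : Equiv.Perm (Fin n)) (T : Finset (Gen n)) :
    (T.map (Equiv.sumCongr w w).toEmbedding).map (Equiv.sumCongr w w).symm.toEmbedding = T := by
  rw [Finset.map_map]
  have he : ((Equiv.sumCongr w w).toEmbedding.trans (Equiv.sumCongr w w).symm.toEmbedding)
      = Function.Embedding.refl (Gen n) := by
    ext a
    simp
  rw [he, Finset.map_refl]

lemma mem_map_symm (w : Equiv.Perm (Fin n)) (a : Gen n) (T : Finset (Gen n)) :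
    a ∈ T.map (Equiv.sumCongr w w).symm.toEmbedding ↔ (Equiv.sumCongr w w) a ∈ T := by
  rw [Finset.mem_map_equiv]
  simp

lemma actsign_insert (w : Equiv.Perm (Fin n)) (a : Gen n) (T : Finset (Gen n)) (ha : a ∉ T) :
    actsign w (insert a T) = actsign w T * ms a T *
      ms ((Equiv.sumCongr w w) a) (T.map (Equiv.sumCongr w w).toEmbedding) := by
  have hd : Disjoint ({a} : Finset (Gen n)) T := Finset.disjoint_singleton_left.2 ha
  have h := actsign_union w {a} T hd
  rw [Finset.map_singleton] at h
  rw [Finset.insert_eq, h, actsign_singleton, one_mul, msign_singleton, msign_singleton]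
  rfl

lemma pact_sum {ι : Type*} (w : Equiv.Perm (Fin n)) (s : Finset ι) (F : ι → ExtA n) :
    pact w (∑ x ∈ s, F x) = ∑ x ∈ s, pact w (F x) := by
  funext T
  simp [pact, Finset.sum_apply, Finset.mul_sum]

lemma pact_smul (w : Equiv.Perm (Fin n)) (c : ℂ) (f : ExtA n) :
    pact w (c • f) = c • pact w f := by
  funext T
  simp [pact]
  ring

lemma pact_opD (w : Equiv.Perm (Fin n)) (j : Fin n) (f : ExtA n) :
    pact w (opD (Sum.inl j) f) = opD (Sum.inl (w j)) (pact w f) := by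
  funext T
  simp only [pact, opD]
  set T' := T.map (Equiv.sumCongr w w).symm.toEmbedding with hT'
  have hmem : Sum.inl (w j) ∈ T ↔ Sum.inl j ∈ T' := by
    rw [hT', mem_map_symm]
    rfl
  have hmapins : (insert (Sum.inl (w j)) T).map (Equiv.sumCongr w w).symm.toEmbedding
      = insert (Sum.inl j) T' := by
    rw [Finset.map_insert]
    congr 1
    simp [Equiv.Perm.sumCongr_symm]
  by_cases h : Sum.inl j ∈ T'
  · rw [if_pos h, if_pos (hmem.2 h), mul_zero]
  · rw [if_neg h, if_neg (fun hh => h (hmem.1 hh)), hmapins,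
      actsign_insert w (Sum.inl j) T' h, map_symm_map]
    have hs : (Equiv.sumCongr w w) (Sum.inl j) = Sum.inl (w j) := rfl
    rw [hs]
    linear_combination (-(actsign w T' * ms (Sum.inl j) T' * f (insert (Sum.inl j) T'))) *
      ms_sq (Sum.inl (w j)) T

lemma pact_opX (w : Equiv.Perm (Fin n)) (i : Fin n) (g : ExtA n) :
    pact w (opX (Sum.inr i) g) = opX (Sum.inr (w i)) (pact w g) := by
  funext T
  simp only [pact, opX]
  set T' := T.map (Equiv.sumCongr w w).symm.toEmbedding with hT'
  have hmem : Sum.inr (w i) ∈ T ↔ Sum.inr i ∈ T' := by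
    rw [hT', mem_map_symm]
    rfl
  have hmaperase : (T.erase (Sum.inr (w i))).map (Equiv.sumCongr w w).symm.toEmbedding
      = T'.erase (Sum.inr i) := by
    rw [Finset.map_erase]
    congr 1
    simp [Equiv.Perm.sumCongr_symm]
  by_cases h : Sum.inr i ∈ T'
  · rw [if_pos h, if_pos (hmem.2 h), hmaperase]
    have hins := actsign_insert w (Sum.inr i) (T'.erase (Sum.inr i))
      (Finset.notMem_erase _ _)
    rw [Finset.insert_erase h] at hins
    have hmap2 : (T'.erase (Sum.inr i)).map (Equiv.sumCongr w w).toEmbedding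
        = T.erase (Sum.inr (w i)) := by
      rw [Finset.map_erase, hT', map_symm_map]
      rfl
    rw [hins, hmap2]
    have hs : (Equiv.sumCongr w w) (Sum.inr i) = Sum.inr (w i) := rfl
    rw [hs]
    linear_combination (actsign w (T'.erase (Sum.inr i)) *
        ms (Sum.inr (w i)) (T.erase (Sum.inr (w i))) * g (T'.erase (Sum.inr i))) *
      ms_sq (Sum.inr i) (T'.erase (Sum.inr i))
  · rw [if_neg h, if_neg (fun hh => h (hmem.1 hh)), mul_zero]

lemma pact_rho (w : Equiv.Perm (Fin n)) (B : Finset (Fin n)) (f : ExtA n) :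
    pact w (rho B f) = rho (B.image w) (pact w f) := by
  rw [rho_eq, rho_eq, Finset.card_image_of_injective B w.injective]
  split_ifs with h
  · rw [pact_sum]
    rw [Finset.sum_image (fun x _ y _ hxy => w.injective hxy)]
    refine Finset.sum_congr rfl fun i _ => ?_
    rw [pact_sum]
    have he : (B.image w).erase (w i) = (B.erase i).image w := by
      rw [Finset.image_erase w.injective]
    rw [he, Finset.sum_image (fun x _ y _ hxy => w.injective hxy)]
    refine Finset.sum_congr rfl fun j _ => ?_
    rw [pact_opX, pact_opD]
  · rw [pact_sum, Finset.sum_image (fun x _ y _ hxy => w.injective hxy)]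
    refine Finset.sum_congr rfl fun i _ => ?_
    rw [pact_opX, pact_opD]

end Aux4
section Aux5

variable {n : ℕ}

lemma signAux_prod_list (l : List (Equiv.Perm (Fin n))) (hl : ∀ g ∈ l, g.IsSwap) :
    Equiv.Perm.signAux l.prod = (-1 : ℤˣ) ^ l.length := by
  induction l with
  | nil => simp [Equiv.Perm.signAux_one]
  | cons g l ih =>
    rw [List.prod_cons, Equiv.Perm.signAux_mul, List.length_cons, pow_succ,
      ih (fun g hg => hl g (List.mem_cons_of_mem _ hg))]
    obtain ⟨x, y, hxy, rfl⟩ := hl g List.mem_cons_self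
    rw [Equiv.Perm.signAux_swap hxy]
    exact mul_comm _ _

lemma sign_eq_signAux (f : Equiv.Perm (Fin n)) :
    (Equiv.Perm.sign f : ℤˣ) = Equiv.Perm.signAux f := by
  obtain ⟨l, hl1, hl2⟩ := (Equiv.Perm.truncSwapFactors f).out
  rw [← hl1, Equiv.Perm.sign_prod_list_swap hl2, signAux_prod_list l hl2]

lemma signAux_eq_pow (f : Equiv.Perm (Fin n)) :
    Equiv.Perm.signAux f
      = (-1 : ℤˣ) ^ (((Equiv.Perm.finPairsLT n).filter (fun x => f x.1 ≤ f x.2)).card) := by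
  unfold Equiv.Perm.signAux
  calc (∏ x ∈ Equiv.Perm.finPairsLT n, if f x.1 ≤ f x.2 then (-1 : ℤˣ) else 1)
      = ∏ x ∈ Equiv.Perm.finPairsLT n, (-1 : ℤˣ) ^ (if f x.1 ≤ f x.2 then 1 else 0) := by
        refine Finset.prod_congr rfl fun x _ => ?_
        split_ifs <;> simp
    _ = (-1 : ℤˣ) ^ (∑ x ∈ Equiv.Perm.finPairsLT n, if f x.1 ≤ f x.2 then 1 else 0) :=
        Finset.prod_pow_eq_pow_sum _ _ _
    _ = _ := by rw [← Finset.card_filter]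

lemma actsign_top (w : Equiv.Perm (Fin n)) :
    actsign w ((Finset.univ : Finset (Fin n)).image Sum.inl) = ((Equiv.Perm.sign w : ℤ) : ℂ) := by
  unfold actsign
  rw [sign_eq_signAux, signAux_eq_pow]
  push_cast
  congr 1
  refine (Finset.card_bij (fun x _ => ((Sum.inl x.2 : Gen n), (Sum.inl x.1 : Gen n))) ?_ ?_ ?_).symm
  · intro x hx
    simp only [Finset.mem_filter, Equiv.Perm.mem_finPairsLT] at hx
    obtain ⟨hlt, hle⟩ := hx
    have hne : x.2 ≠ x.1 := ne_of_lt hlt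
    have hwlt : w x.1 < w x.2 := lt_of_le_of_ne hle (fun h => hne (w.injective h).symm)
    simp only [Finset.mem_filter, Finset.mem_product, Finset.mem_image, Finset.mem_univ,
      true_and]
    refine ⟨⟨⟨x.2, rfl⟩, ⟨x.1, rfl⟩⟩, ?_, ?_⟩
    · exact hlt
    · exact hwlt
  · intro x hx y hy hxy
    simp only [Prod.mk.injEq, Sum.inl.injEq] at hxy
    exact Sigma.ext (by simp [hxy.2]) (by simp [hxy.1])
  · intro q hq
    rcases q with ⟨q1, q2⟩
    simp only [Finset.mem_filter, Finset.mem_product, Finset.mem_image, Finset.mem_univ,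
      true_and] at hq
    obtain ⟨⟨⟨a, ha⟩, ⟨b, hb⟩⟩, h1, h2⟩ := hq
    subst ha
    subst hb
    refine ⟨⟨b, a⟩, ?_, rfl⟩
    simp only [Finset.mem_filter, Equiv.Perm.mem_finPairsLT]
    exact ⟨h1, le_of_lt h2⟩

lemma top_map (w : Equiv.Perm (Fin n)) :
    ((Finset.univ : Finset (Fin n)).image Sum.inl).map (Equiv.sumCongr w w).toEmbedding
      = (Finset.univ : Finset (Fin n)).image Sum.inl := by
  ext a
  simp only [Finset.mem_map, Finset.mem_image, Finset.mem_univ, true_and]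
  constructor
  · rintro ⟨x, ⟨i, rfl⟩, rfl⟩
    exact ⟨w i, rfl⟩
  · rintro ⟨i, rfl⟩
    exact ⟨Sum.inl (w.symm i), ⟨w.symm i, rfl⟩, by simp⟩

lemma top_map_symm (w : Equiv.Perm (Fin n)) :
    ((Finset.univ : Finset (Fin n)).image Sum.inl).map (Equiv.sumCongr w w).symm.toEmbedding
      = (Finset.univ : Finset (Fin n)).image Sum.inl := by
  conv_lhs => rw [← top_map w]
  rw [map_map_symm]

lemma pact_top (w : Equiv.Perm (Fin n)) :
    pact w (topTheta n) = ((Equiv.Perm.sign w : ℤ) : ℂ) • topTheta n := by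
  funext T
  simp only [pact, topTheta, emon, Pi.smul_apply, smul_eq_mul]
  have hiff : T.map (Equiv.sumCongr w w).symm.toEmbedding
      = (Finset.univ : Finset (Fin n)).image Sum.inl ↔
      T = (Finset.univ : Finset (Fin n)).image Sum.inl := by
    constructor
    · intro h
      have h2 := congrArg (Finset.map (Equiv.sumCongr w w).toEmbedding) h
      rwa [map_symm_map, top_map] at h2
    · intro h
      subst h
      exact top_map_symm w
  by_cases hT : T = (Finset.univ : Finset (Fin n)).image Sum.inl
  · rw [if_pos (hiff.2 hT), if_pos hT, mul_one, mul_one]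
    subst hT
    rw [top_map_symm, actsign_top]
  · rw [if_neg (fun hh => hT (hiff.1 hh)), if_neg hT, mul_zero, mul_zero]

end Aux5
section Aux6

variable {n : ℕ}

lemma foldr_pact (w : Equiv.Perm (Fin n)) (L : List (Finset (Fin n))) (f : ExtA n) :
    pact w (L.foldr (fun B g => rho B ∘ g) id f)
      = (L.map (fun B => B.image w)).foldr (fun B g => rho B ∘ g) id (pact w f) := by
  induction L with
  | nil => rfl
  | cons B L ih =>
    simp only [List.foldr_cons, List.map_cons, Function.comp_apply]
    rw [pact_rho, ih]

lemma foldr_smul (L : List (Finset (Fin n))) (c : ℂ) (f : ExtA n) :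
    L.foldr (fun B g => rho B ∘ g) id (c • f)
      = c • L.foldr (fun B g => rho B ∘ g) id f := by
  induction L with
  | nil => rfl
  | cons B L ih =>
    simp only [List.foldr_cons, Function.comp_apply]
    rw [ih, rho_smul]

lemma foldr_perm {L1 L2 : List (Finset (Fin n))} (h : L1.Perm L2) (f : ExtA n) :
    L1.foldr (fun B g => rho B ∘ g) id f = L2.foldr (fun B g => rho B ∘ g) id f := by
  induction h with
  | nil => rfl
  | cons x _ ih =>
    simp only [List.foldr_cons, Function.comp_apply]
    rw [ih]
  | swap x y l =>
    simp only [List.foldr_cons, Function.comp_apply]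
    rw [rho_comm]
  | trans _ _ ih1 ih2 => rw [ih1, ih2]

lemma image_w_injective (w : Equiv.Perm (Fin n)) :
    Function.Injective (fun B : Finset (Fin n) => B.image w) := by
  intro B C hBC
  simp only at hBC
  ext x
  constructor
  · intro hx
    have hm : w x ∈ C.image w := hBC ▸ Finset.mem_image_of_mem w hx
    rcases Finset.mem_image.1 hm with ⟨y, hy, hxy⟩
    rwa [← w.injective hxy]
  · intro hx
    have hm : w x ∈ B.image w := hBC ▸ Finset.mem_image_of_mem w hx
    rcases Finset.mem_image.1 hm with ⟨y, hy, hxy⟩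
    rwa [← w.injective hxy]

end Aux6
/-- For every set partition `π` of `[n]` and every permutation `w`, the set-partition
fermions satisfy `w · F_π = sign(w) · F_{w(π)}`, where `w(π)` is the set partition whose
blocks are the images of the blocks of `π` under `w`. -/
theorem pact_Fperm (n : ℕ) (w : Equiv.Perm (Fin n))
    (π π' : Finpartition (Finset.univ : Finset (Fin n)))
    (h : π'.parts = π.parts.image (fun B => B.image w)) :
    pact w (Fperm π) = (((Equiv.Perm.sign w : ℤ) : ℂ)) • Fperm π' := by
  have hperm : π'.parts.toList.Perm (π.parts.toList.map (fun B => B.image w)) := by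
    rw [← Multiset.coe_eq_coe, Finset.coe_toList, ← Multiset.map_coe, Finset.coe_toList, h,
      Finset.image_val, Multiset.dedup_eq_self.2 (π.parts.nodup.map (image_w_injective w))]
  show pact w (rhoPartition π (topTheta n)) = _ • rhoPartition π' (topTheta n)
  unfold rhoPartition
  rw [foldr_pact, pact_top, foldr_smul, foldr_perm hperm]
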